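/- Every cube tiling of ℝ² contains a column; that is, if T ⊆ ℝ² determines a cube tiling of ℝ², then there exist s ∈ ℝ² and a standard basis vector eᵢ of ℝ² such that s + k·eᵢ ∈ T for every k ∈ ℤ. -/

import Mathlib

/-- The half-open unit cube `[0,1)ⁿ` translated by `t`. -/
def Cube {n : ℕ} (t : Fin n → ℝ) : Set (Fin n → ℝ) :=
  {x | ∀ j, t j ≤ x j ∧ x j < t j + 1}

/-- `T` determines a cube tiling of `ℝⁿ`: the cubes `[0,1)ⁿ + t`, `t ∈ T`,
are pairwise disjoint and their union is all of `ℝⁿ`. -/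
def IsCubeTiling {n : ℕ} (T : Set (Fin n → ℝ)) : Prop :=
  (∀ s ∈ T, ∀ t ∈ T, s ≠ t → Disjoint (Cube s) (Cube t)) ∧
  (⋃ t ∈ T, Cube t) = Set.univ

/-- `T ⊆ ℝ` determines a tiling of `ℝ` by unit intervals `[0,1) + t`. -/
def IsCubeTiling1 (T : Set ℝ) : Prop :=
  (∀ s ∈ T, ∀ t ∈ T, s ≠ t → Disjoint (Set.Ico s (s + 1)) (Set.Ico t (t + 1))) ∧
  (⋃ t ∈ T, Set.Ico t (t + 1)) = Set.univ

/-- The tiling determined by `T` contains a column: there are `s ∈ ℝⁿ` and a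
standard basis vector `eᵢ` such that `s + k·eᵢ ∈ T` for every `k ∈ ℤ`. -/
def ContainsColumn {n : ℕ} (T : Set (Fin n → ℝ)) : Prop :=
  ∃ s : Fin n → ℝ, ∃ i : Fin n, ∀ k : ℤ, (s + (k : ℝ) • (Pi.single i 1 : Fin n → ℝ)) ∈ T

/-- A natural code of `ℝⁿ`: each `ε j : ℝ → ℕ⁺` restricts to a bijection from
every coset `x + ℤ` onto the positive integers. -/
def IsNaturalCode {n : ℕ} (ε : Fin n → ℝ → ℕ+) : Prop :=
  ∀ j : Fin n, ∀ x : ℝ, Set.BijOn (ε j) {y : ℝ | ∃ m : ℤ, y = x + m} Set.univ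

namespace CTAux

variable {T : Set (Fin 2 → ℝ)}

lemma tile_unique (hT : IsCubeTiling T) {s t x : Fin 2 → ℝ} (hs : s ∈ T) (ht : t ∈ T)
    (hxs : x ∈ Cube s) (hxt : x ∈ Cube t) : s = t := by
  by_contra h
  exact Set.disjoint_left.mp (hT.1 s hs t ht h) hxs hxt

lemma tile_exists (hT : IsCubeTiling T) (x : Fin 2 → ℝ) : ∃ t ∈ T, x ∈ Cube t := by
  have hx : x ∈ ⋃ t ∈ T, Cube t := by rw [hT.2]; trivial
  simpa using hx

lemma mem_cube2 {t x : Fin 2 → ℝ}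
    (h0 : t 0 ≤ x 0 ∧ x 0 < t 0 + 1) (h1 : t 1 ≤ x 1 ∧ x 1 < t 1 + 1) : x ∈ Cube t := by
  intro j
  fin_cases j
  · exact h0
  · exact h1

lemma cube_apply {t x : Fin 2 → ℝ} (h : x ∈ Cube t) (j : Fin 2) :
    t j ≤ x j ∧ x j < t j + 1 := h j


lemma mem_cube_pt {t : Fin 2 → ℝ} {a b : ℝ}
    (h0 : t 0 ≤ a ∧ a < t 0 + 1) (h1 : t 1 ≤ b ∧ b < t 1 + 1) : ![a, b] ∈ Cube t :=
  mem_cube2 (by simpa using h0) (by simpa using h1)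

lemma close_eq (hT : IsCubeTiling T) {s t : Fin 2 → ℝ} (hs : s ∈ T) (ht : t ∈ T) {y : ℝ}
    (hsy : s 1 ≤ y ∧ y < s 1 + 1) (hty : t 1 ≤ y ∧ y < t 1 + 1)
    (hlt : t 0 < s 0 + 1) (hgt : s 0 < t 0 + 1) : s = t := by
  apply tile_unique hT hs ht (x := ![max (s 0) (t 0), y])
  · exact mem_cube_pt ⟨le_max_left _ _, max_lt (by linarith) hlt⟩ hsy
  · exact mem_cube_pt ⟨le_max_right _ _, max_lt hgt (by linarith)⟩ hty

lemma step_right (hT : IsCubeTiling T) {t : Fin 2 → ℝ} (ht : t ∈ T) {y : ℝ}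
    (hty : t 1 ≤ y ∧ y < t 1 + 1) :
    ∃ s ∈ T, (s 1 ≤ y ∧ y < s 1 + 1) ∧ s 0 = t 0 + 1 := by
  obtain ⟨s, hs, hxs⟩ := tile_exists hT ![t 0 + 1, y]
  have h0 := cube_apply hxs 0
  have h1 := cube_apply hxs 1
  simp only [Matrix.cons_val_zero, Matrix.cons_val_one, Matrix.head_cons] at h0 h1
  refine ⟨s, hs, h1, ?_⟩
  by_contra hne
  have hlt : s 0 < t 0 + 1 := lt_of_le_of_ne h0.1 hne
  have hst : s = t := close_eq hT hs ht h1 hty (by linarith [h0.2]) hlt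
  have h2 : t 0 < s 0 := by linarith [h0.2]
  rw [hst] at h2; exact lt_irrefl _ h2

lemma step_left (hT : IsCubeTiling T) {t : Fin 2 → ℝ} (ht : t ∈ T) {y : ℝ}
    (hty : t 1 ≤ y ∧ y < t 1 + 1) :
    ∃ s ∈ T, (s 1 ≤ y ∧ y < s 1 + 1) ∧ s 0 = t 0 - 1 := by
  obtain ⟨s, hs, hxs⟩ := tile_exists hT ![t 0 - 1, y]
  have h0 := cube_apply hxs 0
  have h1 := cube_apply hxs 1
  simp only [Matrix.cons_val_zero, Matrix.cons_val_one, Matrix.head_cons] at h0 h1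
  refine ⟨s, hs, h1, ?_⟩
  by_contra hne
  have hlt : s 0 < t 0 - 1 := lt_of_le_of_ne h0.1 hne
  obtain ⟨r, hr, hry, hr0⟩ := step_right hT hs h1
  have hrt : r = t := close_eq hT hr ht hry hty (by linarith [h0.2]) (by linarith)
  have h2 : r 0 < t 0 := by rw [hr0]; linarith
  rw [hrt] at h2; exact lt_irrefl _ h2

lemma coset (hT : IsCubeTiling T) {s t : Fin 2 → ℝ} (hs : s ∈ T) (ht : t ∈ T) {y : ℝ}
    (hsy : s 1 ≤ y ∧ y < s 1 + 1) (hty : t 1 ≤ y ∧ y < t 1 + 1) :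
    ∃ k : ℤ, s 0 = t 0 + k := by
  have key : ∀ k : ℤ, ∃ w ∈ T, (w 1 ≤ y ∧ y < w 1 + 1) ∧ w 0 = t 0 + k := by
    intro k
    induction k using Int.induction_on with
    | zero => exact ⟨t, ht, hty, by simp⟩
    | succ n ih =>
        obtain ⟨w, hw, hwy, hw0⟩ := ih
        obtain ⟨r, hr, hry, hr0⟩ := step_right hT hw hwy
        exact ⟨r, hr, hry, by rw [hr0, hw0]; push_cast; ring⟩
    | pred n ih =>
        obtain ⟨w, hw, hwy, hw0⟩ := ih
        obtain ⟨r, hr, hry, hr0⟩ := step_left hT hw hwy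
        exact ⟨r, hr, hry, by rw [hr0, hw0]; push_cast; ring⟩
  obtain ⟨w, hw, hwy, hw0⟩ := key ⌊s 0 - t 0⌋
  have h1 : w 0 ≤ s 0 := by rw [hw0]; linarith [Int.floor_le (s 0 - t 0)]
  have h2 : s 0 < w 0 + 1 := by rw [hw0]; linarith [Int.lt_floor_add_one (s 0 - t 0)]
  have hsw : s = w := close_eq hT hs hw hsy hwy (by linarith) h2
  exact ⟨⌊s 0 - t 0⌋, (congrFun hsw 0).trans hw0⟩

lemma up (hT : IsCubeTiling T) {t : Fin 2 → ℝ} (ht : t ∈ T) :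
    ∃ u ∈ T, u 1 = t 1 + 1 ∧ t 0 - 1 < u 0 ∧ u 0 ≤ t 0 := by
  obtain ⟨u, hu, hxu⟩ := tile_exists hT ![t 0, t 1 + 1]
  have h0 := cube_apply hxu 0
  have h1 := cube_apply hxu 1
  simp only [Matrix.cons_val_zero, Matrix.cons_val_one, Matrix.head_cons] at h0 h1
  refine ⟨u, hu, ?_, by linarith [h0.2], h0.1⟩
  by_contra hne
  have hu1lt : u 1 < t 1 + 1 := lt_of_le_of_ne h1.1 hne
  set y := max (t 1) (u 1) with hy
  have hty : t 1 ≤ y ∧ y < t 1 + 1 := ⟨le_max_left _ _, max_lt (by linarith) hu1lt⟩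
  have huy : u 1 ≤ y ∧ y < u 1 + 1 := ⟨le_max_right _ _, max_lt (by linarith [h1.2]) (by linarith)⟩
  obtain ⟨k, hk⟩ := coset hT hu ht huy hty
  have hk1 : (-1 : ℝ) < (k : ℝ) := by linarith [h0.2]
  have hk2 : (k : ℝ) ≤ 0 := by linarith [h0.1]
  have hk1' : (-1 : ℤ) < k := by exact_mod_cast hk1
  have hk2' : k ≤ 0 := by exact_mod_cast hk2
  have hk0 : k = 0 := by omega
  have hu0 : u 0 = t 0 := by rw [hk, hk0]; simp
  have hut : u = t := by
    apply tile_unique hT hu ht (x := ![t 0, y])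
    · exact mem_cube_pt ⟨le_of_eq hu0, by linarith [hu0.symm.le]⟩ huy
    · exact mem_cube_pt ⟨le_refl _, by linarith⟩ hty
  rw [hut] at h1
  linarith [h1.2]

lemma level_eq (hT : IsCubeTiling T) {t r : Fin 2 → ℝ} (hr : r ∈ T) (ht : t ∈ T) {b : ℝ}
    (hne : ∀ k : ℤ, t 0 ≠ r 0 + k) (h1 : t 1 < b) (h2 : b ≤ t 1 + 1)
    (hrb : r 1 ≤ b ∧ b < r 1 + 1) : r 1 = b := by
  by_contra hne'
  have hlt : r 1 < b := lt_of_le_of_ne hrb.1 hne'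
  set y0 := max (r 1) (t 1) with hy0
  have hry : r 1 ≤ y0 ∧ y0 < r 1 + 1 :=
    ⟨le_max_left _ _, max_lt (lt_add_one _) (by linarith [hrb.2])⟩
  have hty : t 1 ≤ y0 ∧ y0 < t 1 + 1 :=
    ⟨le_max_right _ _, max_lt (by linarith) (lt_add_one _)⟩
  obtain ⟨k, hk⟩ := coset hT ht hr hty hry
  exact hne k hk

lemma horiz_right (hT : IsCubeTiling T) {v t : Fin 2 → ℝ} (hv : v ∈ T) (ht : t ∈ T)
    (hne : ∀ k : ℤ, t 0 ≠ v 0 + k) (h1 : t 1 < v 1) (h2 : v 1 ≤ t 1 + 1) :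
    ∃ r ∈ T, r 0 = v 0 + 1 ∧ r 1 = v 1 := by
  obtain ⟨r, hr, hxr⟩ := tile_exists hT ![v 0 + 1, v 1]
  have h0 := cube_apply hxr 0
  have hh1 := cube_apply hxr 1
  simp only [Matrix.cons_val_zero, Matrix.cons_val_one, Matrix.head_cons] at h0 hh1
  have hvy : v 1 ≤ v 1 ∧ v 1 < v 1 + 1 := ⟨le_refl _, lt_add_one _⟩
  obtain ⟨m, hm⟩ := coset hT hr hv hh1 hvy
  have hm1 : (m : ℝ) ≤ 1 := by linarith [h0.1]
  have hm0 : (0 : ℝ) < (m : ℝ) := by linarith [h0.2]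
  have hm1' : m ≤ 1 := by exact_mod_cast hm1
  have hm0' : 0 < m := by exact_mod_cast hm0
  have hmm : m = 1 := by omega
  have hr0 : r 0 = v 0 + 1 := by rw [hm, hmm]; norm_num
  have hner : ∀ k : ℤ, t 0 ≠ r 0 + k := by
    intro k hk
    apply hne (1 + k)
    rw [hr0] at hk
    push_cast
    push_cast at hk
    linarith
  exact ⟨r, hr, hr0, level_eq hT hr ht hner h1 h2 hh1⟩

lemma horiz_left (hT : IsCubeTiling T) {v t : Fin 2 → ℝ} (hv : v ∈ T) (ht : t ∈ T)
    (hne : ∀ k : ℤ, t 0 ≠ v 0 + k) (h1 : t 1 < v 1) (h2 : v 1 ≤ t 1 + 1) :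
    ∃ r ∈ T, r 0 = v 0 - 1 ∧ r 1 = v 1 := by
  obtain ⟨r, hr, hxr⟩ := tile_exists hT ![v 0 - 1, v 1]
  have h0 := cube_apply hxr 0
  have hh1 := cube_apply hxr 1
  simp only [Matrix.cons_val_zero, Matrix.cons_val_one, Matrix.head_cons] at h0 hh1
  have hvy : v 1 ≤ v 1 ∧ v 1 < v 1 + 1 := ⟨le_refl _, lt_add_one _⟩
  obtain ⟨m, hm⟩ := coset hT hr hv hh1 hvy
  have hm1 : (m : ℝ) ≤ -1 := by linarith [h0.1]
  have hm0 : (-2 : ℝ) < (m : ℝ) := by linarith [h0.2]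
  have hm1' : m ≤ -1 := by exact_mod_cast hm1
  have hm0' : (-2 : ℤ) < m := by exact_mod_cast hm0
  have hmm : m = -1 := by omega
  have hr0 : r 0 = v 0 - 1 := by rw [hm, hmm]; push_cast; ring
  have hner : ∀ k : ℤ, t 0 ≠ r 0 + k := by
    intro k hk
    apply hne (-1 + k)
    rw [hr0] at hk
    push_cast
    push_cast at hk
    linarith
  exact ⟨r, hr, hr0, level_eq hT hr ht hner h1 h2 hh1⟩

lemma horiz_col (hT : IsCubeTiling T) {v t : Fin 2 → ℝ} (hv : v ∈ T) (ht : t ∈ T)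
    (hne : ∀ k : ℤ, t 0 ≠ v 0 + k) (h1 : t 1 < v 1) (h2 : v 1 ≤ t 1 + 1) :
    ∀ k : ℤ, ∃ w ∈ T, w 0 = v 0 + k ∧ w 1 = v 1 := by
  intro k
  induction k using Int.induction_on with
  | zero => exact ⟨v, hv, by simp, rfl⟩
  | succ n ih =>
      obtain ⟨w, hw, hw0, hw1⟩ := ih
      have hnew : ∀ m : ℤ, t 0 ≠ w 0 + m := by
        intro m hm
        apply hne (n + m)
        rw [hw0] at hm
        push_cast
        push_cast at hm
        linarith
      obtain ⟨r, hr, hr0, hr1⟩ :=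
        horiz_right hT hw ht hnew (by rw [hw1]; exact h1) (by rw [hw1]; exact h2)
      exact ⟨r, hr, by rw [hr0, hw0]; push_cast; ring, by rw [hr1, hw1]⟩
  | pred n ih =>
      obtain ⟨w, hw, hw0, hw1⟩ := ih
      have hnew : ∀ m : ℤ, t 0 ≠ w 0 + m := by
        intro m hm
        apply hne (-n + m)
        rw [hw0] at hm
        push_cast
        push_cast at hm
        linarith
      obtain ⟨r, hr, hr0, hr1⟩ :=
        horiz_left hT hw ht hnew (by rw [hw1]; exact h1) (by rw [hw1]; exact h2)
      exact ⟨r, hr, by rw [hr0, hw0]; push_cast; ring, by rw [hr1, hw1]⟩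

def HCol (T : Set (Fin 2 → ℝ)) : Prop :=
  ∃ v ∈ T, ∀ k : ℤ, ∃ w ∈ T, w 0 = v 0 + k ∧ w 1 = v 1

lemma not_int_unit {a : ℝ} (h0 : 0 < a) (h1 : a < 1) (k : ℤ) : a ≠ (k : ℝ) := by
  intro h
  have hk0 : (0 : ℝ) < (k : ℝ) := by rw [← h]; exact h0
  have hk1 : (k : ℝ) < 1 := by rw [← h]; exact h1
  have hk0' : 0 < k := by exact_mod_cast hk0
  have hk1' : k < 1 := by exact_mod_cast hk1
  omega

lemma up_exact (hT : IsCubeTiling T) (hnc : ¬ HCol T) {t : Fin 2 → ℝ} (ht : t ∈ T) :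
    ∃ u ∈ T, u 0 = t 0 ∧ u 1 = t 1 + 1 := by
  obtain ⟨u, hu, hu1, hgt, hle⟩ := up hT ht
  rcases eq_or_lt_of_le hle with h | h
  · exact ⟨u, hu, h, hu1⟩
  · exfalso
    apply hnc
    refine ⟨u, hu, horiz_col hT hu ht ?_ (by rw [hu1]; linarith) (le_of_eq hu1)⟩
    intro k hk
    exact not_int_unit (by linarith : (0:ℝ) < t 0 - u 0) (by linarith) k (by linarith)

lemma down_exact (hT : IsCubeTiling T) (hnc : ¬ HCol T) {t : Fin 2 → ℝ} (ht : t ∈ T) :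
    ∃ d ∈ T, d 0 = t 0 ∧ d 1 = t 1 - 1 := by
  obtain ⟨t', ht', hx⟩ := tile_exists hT ![t 0, t 1 - 1]
  have h0 := cube_apply hx 0
  have h1 := cube_apply hx 1
  simp only [Matrix.cons_val_zero, Matrix.cons_val_one, Matrix.head_cons] at h0 h1
  obtain ⟨u, hu, hu1, hugt, hule⟩ := up hT ht'
  have hcu : u 1 ≤ t 1 ∧ t 1 < u 1 + 1 := ⟨by linarith [h1.1], by linarith [h1.2]⟩
  obtain ⟨k, hk⟩ := coset hT hu ht hcu ⟨le_refl _, lt_add_one _⟩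
  have hkle : (k : ℝ) ≤ 0 := by linarith [h0.1]
  have hkgt : (-2 : ℝ) < (k : ℝ) := by linarith [h0.2]
  have hkle' : k ≤ 0 := by exact_mod_cast hkle
  have hkgt' : (-2 : ℤ) < k := by exact_mod_cast hkgt
  rcases (by omega : k = 0 ∨ k = -1) with hk0 | hkm1
  · -- u sits directly on top of t', aligned with t
    have hu0 : u 0 = t 0 := by rw [hk, hk0]; simp
    have hut : u = t := by
      apply tile_unique hT hu ht (x := ![t 0, t 1])
      · exact mem_cube_pt ⟨le_of_eq hu0, by rw [hu0]; linarith⟩ hcu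
      · exact mem_cube_pt ⟨le_refl _, by linarith⟩ ⟨le_refl _, by linarith⟩
    refine ⟨t', ht', ?_, ?_⟩
    · have : t 0 ≤ t' 0 := by rw [← hu0]; exact hule
      linarith [h0.1]
    · have hut1 : u 1 = t 1 := by rw [hut]
      linarith [hu1]
  · exfalso
    apply hnc
    have hu0 : u 0 = t 0 - 1 := by rw [hk, hkm1]; push_cast; ring
    have ht'lt : t' 0 < t 0 := by
      by_contra hge
      push_neg at hge
      have heq : t' 0 = t 0 := le_antisymm h0.1 hge
      rw [heq] at hugt
      linarith
    refine ⟨u, hu, horiz_col hT hu ht' ?_ (by linarith) (le_of_eq hu1)⟩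
    intro m hm
    exact not_int_unit (by linarith [h0.2] : (0:ℝ) < t' 0 - u 0) (by linarith) m (by linarith)

end CTAux

open CTAux

/-- Every cube tiling of ℝ^2 contains a column. -/
theorem cube_tiling_dim2_contains_column (T : Set (Fin 2 → ℝ)) (hT : IsCubeTiling T) :
    ∃ s : Fin 2 → ℝ, ∃ i : Fin 2, ∀ k : ℤ, (s + (k : ℝ) • (Pi.single i 1 : Fin 2 → ℝ)) ∈ T := by
  by_cases hc : HCol T
  · obtain ⟨v, hv, hcol⟩ := hc
    refine ⟨v, 0, fun k => ?_⟩
    obtain ⟨w, hw, hw0, hw1⟩ := hcol k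
    have heq : v + (k : ℝ) • (Pi.single (0 : Fin 2) 1 : Fin 2 → ℝ) = w := by
      funext j
      fin_cases j
      · simp [Pi.single_apply, hw0]
      · simp [Pi.single_apply, hw1]
    rw [heq]; exact hw
  · obtain ⟨t0, ht0, _⟩ := tile_exists hT 0
    have key : ∀ k : ℤ, ∃ w ∈ T, w 0 = t0 0 ∧ w 1 = t0 1 + k := by
      intro k
      induction k using Int.induction_on with
      | zero => exact ⟨t0, ht0, rfl, by simp⟩
      | succ n ih =>
          obtain ⟨w, hw, hw0, hw1⟩ := ih
          obtain ⟨u, hu, hu0, hu1⟩ := up_exact hT hc hw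
          exact ⟨u, hu, by rw [hu0, hw0], by rw [hu1, hw1]; push_cast; ring⟩
      | pred n ih =>
          obtain ⟨w, hw, hw0, hw1⟩ := ih
          obtain ⟨u, hu, hu0, hu1⟩ := down_exact hT hc hw
          exact ⟨u, hu, by rw [hu0, hw0], by rw [hu1, hw1]; push_cast; ring⟩
    refine ⟨t0, 1, fun k => ?_⟩
    obtain ⟨w, hw, hw0, hw1⟩ := key k
    have heq : t0 + (k : ℝ) • (Pi.single (1 : Fin 2) 1 : Fin 2 → ℝ) = w := by
      funext j
      fin_cases j
      · simp [Pi.single_apply, hw0]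
      · simp [Pi.single_apply, hw1]
    rw [heq]; exact hw
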